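/- Let $X$ be a compact metric space, $f : X \to X$ continuous, and suppose the map $\mu \mapsto h(\mu)$ from $f$-invariant Borel probability measures to $[0,\infty)$ is upper semi-continuous (weak-* topology) and affine. Let $(\phi_n)$ be a sequence of continuous functions such that $\mu \mapsto \int \phi_n \, d\mu$ is non-increasing in $n$ for every invariant $\mu$, with pointwise-in-$\mu$ limit $\Phi(\mu) = \inf_n \int \phi_n d\mu \in [-\infty,\infty)$. Then $\lim_{n\to\infty} \sup_\mu \left( h(\mu) + \int \phi_n \, d\mu \right) = \sup_\mu \left( h(\mu) + \Phi(\mu) \right)$, the suprema over all $f$-invariant Borel probability measures. -/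

import Mathlib

open Filter MeasureTheory
open Set TopologicalSpace Topology
open scoped ENNReal NNReal
set_option linter.unusedSectionVars false
set_option maxHeartbeats 1000000

namespace CFHaux

variable {X : Type*} [MetricSpace X] [CompactSpace X] [MeasurableSpace X] [BorelSpace X]

/-- Candidate functions for the Riesz content of a set `K`. -/
def ACand (K : Set X) : Set C(X, ℝ) := {g | (∀ x, 0 ≤ g x) ∧ ∀ x ∈ K, 1 ≤ g x}

lemma one_mem_ACand (K : Set X) : (1 : C(X, ℝ)) ∈ ACand K :=
  ⟨fun _ => zero_le_one, fun _ _ => le_refl 1⟩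

variable (Λ : C(X, ℝ) → ℝ)

/-- The Riesz content value. -/
noncomputable def cK (K : Set X) : ℝ := sInf (Λ '' ACand K)

section basic

variable (hadd : ∀ g₁ g₂ : C(X, ℝ), Λ (g₁ + g₂) = Λ g₁ + Λ g₂)
  (hpos : ∀ g : C(X, ℝ), (∀ x, 0 ≤ g x) → 0 ≤ Λ g)

include hadd hpos

lemma lam_mono {g₁ g₂ : C(X, ℝ)} (hle : ∀ x, g₁ x ≤ g₂ x) : Λ g₁ ≤ Λ g₂ := by
  have h1 : g₁ + (g₂ - g₁) = g₂ := by ext x; simp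
  have h2 : 0 ≤ Λ (g₂ - g₁) := hpos _ (fun x => by simpa using sub_nonneg.2 (hle x))
  have := hadd g₁ (g₂ - g₁)
  rw [h1] at this
  linarith

lemma lb_image (K : Set X) : ∀ a ∈ Λ '' ACand K, (0:ℝ) ≤ a := by
  rintro a ⟨g, hg, rfl⟩; exact hpos g hg.1

lemma image_nonempty (K : Set X) : (Λ '' ACand K).Nonempty :=
  ⟨Λ 1, ⟨1, one_mem_ACand K, rfl⟩⟩

lemma cK_nonneg (K : Set X) : 0 ≤ cK Λ K :=
  le_csInf (image_nonempty Λ hadd hpos K) (lb_image Λ hadd hpos K)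

lemma cK_le {K : Set X} {g : C(X, ℝ)} (hg : g ∈ ACand K) : cK Λ K ≤ Λ g :=
  csInf_le ⟨0, lb_image Λ hadd hpos K⟩ ⟨g, hg, rfl⟩

lemma cK_mono {K₁ K₂ : Set X} (h : K₁ ⊆ K₂) : cK Λ K₁ ≤ cK Λ K₂ := by
  apply le_csInf (image_nonempty Λ hadd hpos K₂)
  rintro a ⟨g, hg, rfl⟩
  exact cK_le Λ hadd hpos ⟨hg.1, fun x hx => hg.2 x (h hx)⟩

lemma cK_union_le (K₁ K₂ : Set X) : cK Λ (K₁ ∪ K₂) ≤ cK Λ K₁ + cK Λ K₂ := by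
  have key : ∀ g₁ ∈ ACand K₁, ∀ g₂ ∈ ACand K₂, cK Λ (K₁ ∪ K₂) ≤ Λ g₁ + Λ g₂ := by
    intro g₁ hg₁ g₂ hg₂
    rw [← hadd]
    refine cK_le Λ hadd hpos ⟨fun x => add_nonneg (hg₁.1 x) (hg₂.1 x), ?_⟩
    rintro x (hx | hx)
    · have := hg₁.2 x hx; have := hg₂.1 x; simp only [ContinuousMap.add_apply]; linarith
    · have := hg₂.2 x hx; have := hg₁.1 x; simp only [ContinuousMap.add_apply]; linarith
  have h1 : ∀ g₁ ∈ ACand K₁, cK Λ (K₁ ∪ K₂) - Λ g₁ ≤ cK Λ K₂ := by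
    intro g₁ hg₁
    apply le_csInf (image_nonempty Λ hadd hpos K₂)
    rintro a ⟨g₂, hg₂, rfl⟩
    linarith [key g₁ hg₁ g₂ hg₂]
  have h2 : cK Λ (K₁ ∪ K₂) - cK Λ K₂ ≤ cK Λ K₁ := by
    apply le_csInf (image_nonempty Λ hadd hpos K₁)
    rintro a ⟨g₁, hg₁, rfl⟩
    linarith [h1 g₁ hg₁]
  linarith

lemma cK_union_disjoint {K₁ K₂ : Set X} (h : Disjoint K₁ K₂) (h₁ : IsClosed K₁)
    (h₂ : IsClosed K₂) : cK Λ (K₁ ∪ K₂) = cK Λ K₁ + cK Λ K₂ := by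
  refine le_antisymm (cK_union_le Λ hadd hpos K₁ K₂) ?_
  obtain ⟨u, hu0, hu1, hu01⟩ := exists_continuous_zero_one_of_isClosed h₂ h₁ h.symm
  -- u = 0 on K₂, u = 1 on K₁, 0 ≤ u ≤ 1
  apply le_csInf (image_nonempty Λ hadd hpos _)
  rintro a ⟨g, hg, rfl⟩
  have hgu : g * u ∈ ACand K₁ := by
    constructor
    · intro x; exact mul_nonneg (hg.1 x) (hu01 x).1
    · intro x hx
      have h1 : u x = 1 := hu1 hx
      have h2 := hg.2 x (Or.inl hx)
      simp only [ContinuousMap.mul_apply, h1, mul_one]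
      exact h2
  have hgu' : g * (1 - u) ∈ ACand K₂ := by
    constructor
    · intro x
      have := (hu01 x).2
      have := hg.1 x
      simp only [ContinuousMap.mul_apply, ContinuousMap.sub_apply, ContinuousMap.one_apply]
      nlinarith [(hu01 x).1, (hu01 x).2]
    · intro x hx
      have h0 : u x = 0 := hu0 hx
      have := hg.2 x (Or.inr hx)
      simp only [ContinuousMap.mul_apply, ContinuousMap.sub_apply, ContinuousMap.one_apply, h0,
        sub_zero, mul_one]
      exact this
  have hsplit : g * u + g * (1 - u) = g := by ext x; simp; ring
  calc cK Λ K₁ + cK Λ K₂ ≤ Λ (g * u) + Λ (g * (1 - u)) :=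
        add_le_add (cK_le Λ hadd hpos hgu) (cK_le Λ hadd hpos hgu')
    _ = Λ g := by rw [← hadd, hsplit]

end basic

section content

variable (hadd : ∀ g₁ g₂ : C(X, ℝ), Λ (g₁ + g₂) = Λ g₁ + Λ g₂)
  (hpos : ∀ g : C(X, ℝ), (∀ x, 0 ≤ g x) → 0 ≤ Λ g)

/-- The Riesz content associated to `Λ`. -/
noncomputable def rContent : Content X where
  toFun K := (cK Λ K.1).toNNReal
  mono' K₁ K₂ h := Real.toNNReal_mono (cK_mono Λ hadd hpos h)
  sup_disjoint' K₁ K₂ hdis h₁ h₂ := by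
    show (cK Λ ((↑K₁ : Set X) ∪ ↑K₂)).toNNReal
        = (cK Λ (↑K₁ : Set X)).toNNReal + (cK Λ (↑K₂ : Set X)).toNNReal
    rw [cK_union_disjoint Λ hadd hpos hdis h₁ h₂,
      Real.toNNReal_add (cK_nonneg Λ hadd hpos _) (cK_nonneg Λ hadd hpos _)]
  sup_le' K₁ K₂ := by
    show (cK Λ ((↑K₁ : Set X) ∪ ↑K₂)).toNNReal ≤ _
    calc (cK Λ ((↑K₁ : Set X) ∪ ↑K₂)).toNNReal ≤ (cK Λ K₁.1 + cK Λ K₂.1).toNNReal :=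
          Real.toNNReal_mono (cK_union_le Λ hadd hpos K₁.1 K₂.1)
      _ = _ := Real.toNNReal_add (cK_nonneg Λ hadd hpos _) (cK_nonneg Λ hadd hpos _)

lemma rContent_apply (K : Compacts X) :
    (rContent Λ hadd hpos) K = ENNReal.ofReal (cK Λ K.1) := rfl

lemma rMeasure_open {U : Set X} (hU : IsOpen U) :
    (rContent Λ hadd hpos).measure U = (rContent Λ hadd hpos).innerContent ⟨U, hU⟩ := by
  rw [Content.measure_apply _ hU.measurableSet, Content.outerMeasure_of_isOpen _ _ hU]

variable (hone : Λ 1 = 1)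

include hone in
lemma rMeasure_univ : (rContent Λ hadd hpos).measure univ = 1 := by
  rw [rMeasure_open Λ hadd hpos isOpen_univ]
  apply le_antisymm
  · refine iSup_le fun K => iSup_le fun _ => ?_
    rw [rContent_apply]
    have h1 : cK Λ K.1 ≤ 1 := by
      have := cK_le Λ hadd hpos (one_mem_ACand (X := X) K.1)
      rwa [hone] at this
    calc ENNReal.ofReal (cK Λ K.1) ≤ ENNReal.ofReal 1 := ENNReal.ofReal_le_ofReal h1
      _ = 1 := ENNReal.ofReal_one
  · have hK : ((⟨univ, isCompact_univ⟩ : Compacts X) : Set X) ⊆ (univ : Set X) := subset_rfl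
    refine le_trans ?_ ((rContent Λ hadd hpos).le_innerContent _ _ hK)
    rw [rContent_apply]
    have h1 : (1:ℝ) ≤ cK Λ (univ : Set X) := by
      apply le_csInf (image_nonempty Λ hadd hpos _)
      rintro a ⟨g, hg, rfl⟩
      have := lam_mono Λ hadd hpos (g₁ := 1) (g₂ := g) (fun x => by simpa using hg.2 x (mem_univ x))
      rwa [hone] at this
    calc (1:ℝ≥0∞) = ENNReal.ofReal 1 := ENNReal.ofReal_one.symm
      _ ≤ _ := ENNReal.ofReal_le_ofReal h1

include hone in
lemma rMeasure_isProbability : IsProbabilityMeasure (rContent Λ hadd hpos).measure :=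
  ⟨rMeasure_univ Λ hadd hpos hone⟩

/-- Lower estimate: the measure of an open set on which `f ≥ 1`. -/
lemma rMeasure_open_le {U : Set X} (hU : IsOpen U) {f : C(X, ℝ)} (hf0 : ∀ x, 0 ≤ f x)
    (h1 : ∀ x ∈ U, 1 ≤ f x) :
    (rContent Λ hadd hpos).measure U ≤ ENNReal.ofReal (Λ f) := by
  rw [rMeasure_open Λ hadd hpos hU]
  refine iSup_le fun K => iSup_le fun hK => ?_
  rw [rContent_apply]
  exact ENNReal.ofReal_le_ofReal (cK_le Λ hadd hpos ⟨hf0, fun x hx => h1 x (hK hx)⟩)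

variable (hsmul : ∀ (c : ℝ) (g : C(X, ℝ)), Λ (c • g) = c * Λ g)

include hone hsmul in
/-- Upper estimate: `Λ f` is at most the measure of an open set containing the support. -/
lemma lam_le_rMeasure {U : Set X} (hU : IsOpen U) {f : C(X, ℝ)} (hf0 : ∀ x, 0 ≤ f x)
    (hf1 : ∀ x, f x ≤ 1) (hsupp : ∀ x, f x ≠ 0 → x ∈ U) :
    Λ f ≤ ((rContent Λ hadd hpos).measure U).toReal := by
  haveI := rMeasure_isProbability Λ hadd hpos hone
  refine le_of_forall_pos_le_add fun δ hδ => ?_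
  set K : Set X := f ⁻¹' Ici δ with hKdef
  have hKclosed : IsClosed K := isClosed_Ici.preimage f.continuous
  have hKcompact : IsCompact K := hKclosed.isCompact
  have hKU : K ⊆ U := fun x hx => hsupp x (ne_of_gt (lt_of_lt_of_le hδ hx))
  have hclaim : Λ f - δ ≤ cK Λ K := by
    apply le_csInf (image_nonempty Λ hadd hpos _)
    rintro a ⟨g, hg, rfl⟩
    have hfg : ∀ x, f x ≤ (g + δ • (1 : C(X,ℝ))) x := by
      intro x
      simp only [ContinuousMap.add_apply, ContinuousMap.smul_apply, ContinuousMap.one_apply,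
        smul_eq_mul, mul_one]
      by_cases hx : x ∈ K
      · have h1 := hg.2 x hx
        have := hf1 x
        linarith
      · have hlt : f x < δ := not_le.1 hx
        have := hg.1 x
        linarith
    have h2 : Λ f ≤ Λ g + δ := by
      have := lam_mono Λ hadd hpos hfg
      rwa [hadd, hsmul, hone, mul_one] at this
    linarith
  have h3 : ENNReal.ofReal (cK Λ K) ≤ (rContent Λ hadd hpos).measure U := by
    rw [rMeasure_open Λ hadd hpos hU]
    exact le_trans (le_of_eq (rContent_apply Λ hadd hpos ⟨K, hKcompact⟩).symm)
      ((rContent Λ hadd hpos).le_innerContent ⟨K, hKcompact⟩ ⟨U, hU⟩ hKU)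
  have h4 : cK Λ K ≤ ((rContent Λ hadd hpos).measure U).toReal := by
    have hne : (rContent Λ hadd hpos).measure U ≠ ⊤ := measure_ne_top _ _
    have := ENNReal.toReal_mono hne h3
    rwa [ENNReal.toReal_ofReal (cK_nonneg Λ hadd hpos _)] at this
  linarith

end content

lemma sum_clamp (n : ℕ) {t : ℝ} (ht : 0 ≤ t) :
    ∑ i ∈ Finset.range n, min 1 (max 0 (t - i)) = min (n : ℝ) t := by
  induction n with
  | zero => simp [min_eq_left ht]
  | succ n ih =>
    rw [Finset.sum_range_succ, ih]
    push_cast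
    rcases le_total t n with h | h
    · rw [min_eq_right h, max_eq_left (by linarith), min_eq_right (by linarith : t ≤ (n:ℝ)+1)]
      simp
    · rw [min_eq_left h]
      rcases le_total t ((n:ℝ)+1) with h' | h'
      · rw [max_eq_right (by linarith), min_eq_right (by linarith : t - n ≤ 1),
          min_eq_right h']
        ring
      · rw [max_eq_right (by linarith), min_eq_left (by linarith : (1:ℝ) ≤ t - n),
          min_eq_left h']

section rep

variable (hadd : ∀ g₁ g₂ : C(X, ℝ), Λ (g₁ + g₂) = Λ g₁ + Λ g₂)
  (hpos : ∀ g : C(X, ℝ), (∀ x, 0 ≤ g x) → 0 ≤ Λ g)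
  (hone : Λ 1 = 1)
  (hsmul : ∀ (c : ℝ) (g : C(X, ℝ)), Λ (c • g) = c * Λ g)

include hadd hpos hone hsmul

lemma rep_nonneg (g : C(X, ℝ)) (hg : ∀ x, 0 ≤ g x) :
    ∫ x, g x ∂(rContent Λ hadd hpos).measure = Λ g := by
  haveI := rMeasure_isProbability Λ hadd hpos hone
  set ν := (rContent Λ hadd hpos).measure with hν
  have integ_cont : ∀ q : C(X,ℝ), Integrable (fun x => q x) ν := fun q =>
    q.continuous.integrable_of_hasCompactSupport (HasCompactSupport.of_compactSpace _)
  suffices H : ∀ ε > (0:ℝ), |Λ g - ∫ x, g x ∂ν| ≤ ε by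
    have h0 : Λ g - ∫ x, g x ∂ν = 0 := by
      by_contra hne
      have hp : 0 < |Λ g - ∫ x, g x ∂ν| := abs_pos.2 hne
      have := H (|Λ g - ∫ x, g x ∂ν| / 2) (by linarith)
      linarith
    linarith
  intro ε hε
  set M : ℝ := ‖g‖ + 1 with hM
  have hM0 : 0 < M := by positivity
  have hgM : ∀ x, g x ≤ M := fun x => by
    have := ContinuousMap.norm_coe_le_norm g x
    rw [Real.norm_eq_abs] at this
    have := abs_le.1 this
    simp only [hM]; linarith [this.2]
  obtain ⟨n, hn⟩ := exists_nat_gt (M / ε)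
  have hn0 : 0 < (n:ℝ) := lt_trans (by positivity) hn
  set r : ℝ := M / n with hr
  have hr0 : 0 < r := by positivity
  have hrε : r < ε := by
    rw [hr, div_lt_iff₀ hn0]
    have hMe : M / ε * ε = M := div_mul_cancel₀ M (ne_of_gt hε)
    nlinarith [mul_lt_mul_of_pos_right hn hε]
  -- the clamp functions
  set F : ℕ → C(X, ℝ) := fun i =>
    ⟨fun x => min 1 (max 0 ((g x - i * r) / r)),
      continuous_const.min (continuous_const.max
        ((g.continuous.sub continuous_const).div_const r))⟩ with hF
  have hF_apply : ∀ i x, F i x = min 1 (max 0 ((g x - i * r) / r)) := fun i x => rfl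
  have hF0 : ∀ i x, 0 ≤ F i x := fun i x => le_min zero_le_one (le_max_left _ _)
  have hF1 : ∀ i x, F i x ≤ 1 := fun i x => min_le_left _ _
  -- the open sets
  set O : ℕ → Set X := fun i => {x | i * r < g x} with hO
  have hOopen : ∀ i, IsOpen (O i) := fun i => isOpen_lt continuous_const g.continuous
  set a : ℕ → ℝ := fun i => (ν (O i)).toReal with ha
  have ha0 : ∀ i, 0 ≤ a i := fun i => ENNReal.toReal_nonneg
  have ha1 : ∀ i, a i ≤ 1 := fun i => by
    have h := measure_mono (μ := ν) (subset_univ (O i))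
    rw [measure_univ (μ := ν)] at h
    have := ENNReal.toReal_mono ENNReal.one_ne_top h
    simpa using this
  have haanti : ∀ i, a (i+1) ≤ a i := fun i => by
    apply ENNReal.toReal_mono (measure_ne_top _ _)
    apply measure_mono
    intro x hx
    have : ((i:ℝ)+1) * r < g x := by
      have := hx
      simpa [hO] using hx
    simp only [hO, mem_setOf_eq]
    nlinarith
  -- pointwise facts
  have hF_one : ∀ i x, x ∈ O (i+1) → F i x = 1 := by
    intro i x hx
    have hgx : ((i:ℝ)+1) * r < g x := by simpa [hO] using hx
    have h1 : (1:ℝ) ≤ (g x - i * r) / r := by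
      rw [le_div_iff₀ hr0]
      nlinarith
    rw [hF_apply, max_eq_right (by linarith), min_eq_left h1]
  have hF_zero : ∀ i x, x ∉ O i → F i x = 0 := by
    intro i x hx
    have hgx : g x ≤ i * r := not_lt.1 (by simpa [hO] using hx)
    have h1 : (g x - i * r) / r ≤ 0 := div_nonpos_of_nonpos_of_nonneg (by linarith) (le_of_lt hr0)
    rw [hF_apply, max_eq_left h1, min_eq_right zero_le_one]
  -- integral bounds
  have hint_lb : ∀ i, a (i+1) ≤ ∫ x, F i x ∂ν := by
    intro i
    have : ∫ x, (O (i+1)).indicator (1 : X → ℝ) x ∂ν = a (i+1) := by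
      rw [ha]
      exact integral_indicator_one (hOopen (i+1)).measurableSet
    rw [← this]
    apply integral_mono ((integrable_const (1:ℝ)).indicator (hOopen (i+1)).measurableSet)
      (integ_cont (F i))
    intro x
    by_cases hx : x ∈ O (i+1)
    · simp [indicator_of_mem hx, hF_one i x hx]
    · simp [indicator_of_notMem hx, hF0 i x]
  have hint_ub : ∀ i, ∫ x, F i x ∂ν ≤ a i := by
    intro i
    have heq : ∫ x, (O i).indicator (fun _ => (1:ℝ)) x ∂ν = a i := by
      rw [ha]
      exact integral_indicator_one (hOopen i).measurableSet
    rw [← heq]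
    apply integral_mono (integ_cont (F i))
      ((integrable_const (1:ℝ)).indicator (hOopen i).measurableSet)
    intro x
    by_cases hx : x ∈ O i
    · simp [indicator_of_mem hx, hF1 i x]
    · simp [indicator_of_notMem hx, hF_zero i x hx]
  -- Λ bounds
  have hlam_lb : ∀ i, a (i+1) ≤ Λ (F i) := by
    intro i
    have h := rMeasure_open_le Λ hadd hpos (hOopen (i+1)) (hF0 i)
      (fun x hx => le_of_eq (hF_one i x hx).symm)
    have := ENNReal.toReal_mono ENNReal.ofReal_ne_top h
    rwa [ENNReal.toReal_ofReal (hpos _ (hF0 i))] at this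
  have hlam_ub : ∀ i, Λ (F i) ≤ a i := by
    intro i
    exact lam_le_rMeasure Λ hadd hpos hone hsmul (hOopen i) (hF0 i) (hF1 i)
      (fun x hx => by by_contra hc; exact hx (hF_zero i x hc))
  -- sum identities
  have hsum : ∀ x, ∑ i ∈ Finset.range n, F i x = g x / r := by
    intro x
    have ht : 0 ≤ g x / r := div_nonneg (hg x) (le_of_lt hr0)
    have hdiv : ∀ i : ℕ, (g x - i * r) / r = g x / r - i := by
      intro i; field_simp
    calc ∑ i ∈ Finset.range n, F i x
        = ∑ i ∈ Finset.range n, min 1 (max 0 (g x / r - i)) := by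
          apply Finset.sum_congr rfl; intro i _; rw [hF_apply, hdiv]
      _ = min (n:ℝ) (g x / r) := sum_clamp n ht
      _ = g x / r := by
          apply min_eq_right
          rw [div_le_iff₀ hr0, hr]
          field_simp
          exact hgM x
  have hgeq : g = r • ∑ i ∈ Finset.range n, F i := by
    ext x
    simp only [ContinuousMap.smul_apply, smul_eq_mul]
    rw [ContinuousMap.coe_sum]
    have := hsum x
    rw [Finset.sum_apply]
    rw [show (∑ i ∈ Finset.range n, F i x) = g x / r from this]
    field_simp
  -- Λ g and ∫ g as sums
  let L : C(X,ℝ) →ₗ[ℝ] ℝ :=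
    { toFun := Λ, map_add' := hadd, map_smul' := fun c q => by simpa using hsmul c q }
  have hLg : Λ g = r * ∑ i ∈ Finset.range n, Λ (F i) := by
    have : Λ g = L g := rfl
    rw [this, hgeq, _root_.map_smul, _root_.map_sum]
    simp [L]
  have hIg : ∫ x, g x ∂ν = r * ∑ i ∈ Finset.range n, ∫ x, F i x ∂ν := by
    conv_lhs => rw [hgeq]
    have : ∀ x, (r • ∑ i ∈ Finset.range n, F i) x
        = r * ∑ i ∈ Finset.range n, F i x := by
      intro x
      simp only [ContinuousMap.smul_apply, smul_eq_mul]
      rw [ContinuousMap.coe_sum, Finset.sum_apply]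
    rw [integral_congr_ae (Filter.Eventually.of_forall this), integral_const_mul]
    congr 1
    rw [integral_finset_sum _ (fun i _ => integ_cont (F i))]
  -- final estimate
  have hterm : ∀ i, |Λ (F i) - ∫ x, F i x ∂ν| ≤ a i - a (i+1) := by
    intro i
    rw [abs_le]
    constructor
    · linarith [hlam_lb i, hint_ub i]
    · linarith [hlam_ub i, hint_lb i]
  have htele : ∑ i ∈ Finset.range n, (a i - a (i+1)) = a 0 - a n :=
    Finset.sum_range_sub' a n
  calc |Λ g - ∫ x, g x ∂ν|
      = r * |∑ i ∈ Finset.range n, (Λ (F i) - ∫ x, F i x ∂ν)| := by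
        rw [hLg, hIg, ← mul_sub, abs_mul, abs_of_pos hr0, Finset.sum_sub_distrib]
    _ ≤ r * ∑ i ∈ Finset.range n, |Λ (F i) - ∫ x, F i x ∂ν| := by
        apply mul_le_mul_of_nonneg_left (Finset.abs_sum_le_sum_abs _ _) (le_of_lt hr0)
    _ ≤ r * ∑ i ∈ Finset.range n, (a i - a (i+1)) := by
        apply mul_le_mul_of_nonneg_left (Finset.sum_le_sum fun i _ => hterm i) (le_of_lt hr0)
    _ = r * (a 0 - a n) := by rw [htele]
    _ ≤ r * 1 := mul_le_mul_of_nonneg_left (by linarith [ha1 0, ha0 n]) (le_of_lt hr0)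
    _ ≤ ε := by linarith

theorem exists_rep :
    ∃ ν : Measure X, IsProbabilityMeasure ν ∧ ∀ g : C(X, ℝ), ∫ x, g x ∂ν = Λ g := by
  refine ⟨(rContent Λ hadd hpos).measure, rMeasure_isProbability Λ hadd hpos hone, fun g => ?_⟩
  haveI := rMeasure_isProbability Λ hadd hpos hone
  set ν := (rContent Λ hadd hpos).measure with hν
  set c : ℝ := ‖g‖ with hc
  have hp0 : ∀ x, 0 ≤ (g + c • (1:C(X,ℝ))) x := by
    intro x
    have := ContinuousMap.norm_coe_le_norm g x
    rw [Real.norm_eq_abs] at this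
    have := abs_le.1 this
    simp only [ContinuousMap.add_apply, ContinuousMap.smul_apply, ContinuousMap.one_apply,
      smul_eq_mul, mul_one]
    linarith [this.1]
  have hrep := rep_nonneg Λ hadd hpos hone hsmul _ hp0
  have hL : Λ (g + c • (1:C(X,ℝ))) = Λ g + c := by
    rw [hadd, hsmul, hone, mul_one]
  have hI : ∫ x, (g + c • (1:C(X,ℝ))) x ∂ν = (∫ x, g x ∂ν) + c := by
    have integ_cont : ∀ q : C(X,ℝ), Integrable (fun x => q x) ν := fun q =>
      q.continuous.integrable_of_hasCompactSupport (HasCompactSupport.of_compactSpace _)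
    have h1 : ∀ x, (g + c • (1:C(X,ℝ))) x = g x + c := by
      intro x
      simp [smul_eq_mul]
    rw [integral_congr_ae (Filter.Eventually.of_forall h1),
      integral_add (integ_cont g) (integrable_const c), integral_const]
    simp
  rw [hL] at hrep
  rw [hI] at hrep
  linarith

end rep

lemma ereal_cancel (a : ℝ) (x : EReal) : ((-a : ℝ) : EReal) + ((a : ℝ) + x) = x := by
  induction x with
  | bot => simp
  | coe r => norm_cast; ring
  | top => simp

lemma ereal_add_iInf (a : ℝ) (c : ℕ → EReal) :
    ((a : ℝ) : EReal) + ⨅ n, c n = ⨅ n, (((a : ℝ) : EReal) + c n) := by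
  apply le_antisymm
  · exact le_iInf fun n => add_le_add_right (iInf_le _ n) _
  · have h1 : ((-a : ℝ) : EReal) + ⨅ n, (((a : ℝ) : EReal) + c n) ≤ ⨅ n, c n :=
      le_iInf fun n => (add_le_add_right (iInf_le _ n) _).trans (le_of_eq (ereal_cancel a (c n)))
    have h2 := add_le_add_right h1 ((a : ℝ) : EReal)
    have h3 : ((a : ℝ) : EReal) + (((-a : ℝ) : EReal) + ⨅ n, (((a : ℝ) : EReal) + c n))
        = ⨅ n, (((a : ℝ) : EReal) + c n) := by
      have := ereal_cancel (-a) (⨅ n, (((a : ℝ) : EReal) + c n))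
      simpa [neg_neg] using this
    rw [h3] at h2
    exact h2

lemma ereal_le_coe_of_forall_eps {a : EReal} {c : ℝ}
    (h : ∀ ε : ℝ, 0 < ε → a ≤ ((c + ε : ℝ) : EReal)) : a ≤ ((c : ℝ) : EReal) := by
  induction a with
  | bot => exact bot_le
  | coe r =>
    exact EReal.coe_le_coe_iff.2
      (le_of_forall_pos_le_add fun ε hε => EReal.coe_le_coe_iff.1 (h ε hε))
  | top => exact absurd (h 1 one_pos) (EReal.coe_lt_top (c + 1)).not_ge

end CFHaux

/-- Abstract variational convergence (cf. Proposition 4.4 in Cao–Feng–Huang): let `h` be an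
upper semi-continuous, affine, non-negative, bounded "entropy" functional on the set of
`f`-invariant Borel probability measures of a compact metric space, and `(φₙ)` continuous
functions whose integrals are non-increasing in `n` for every invariant measure. Then
`lim_n sup_μ (h(μ) + ∫ φₙ dμ) = sup_μ (h(μ) + inf_n ∫ φₙ dμ)`, suprema over invariant `μ`. -/
theorem tendsto_sup_entropy_add_integral {X : Type*} [MetricSpace X] [CompactSpace X]
    [MeasurableSpace X] [BorelSpace X]
    (f : X → X) (hf : Continuous f)
    (h : {μ : ProbabilityMeasure X // (μ : Measure X).map f = (μ : Measure X)} → ℝ)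
    (husc : UpperSemicontinuous h)
    (hnonneg : ∀ μ, 0 ≤ h μ)
    (hbdd : ∃ C : ℝ, ∀ μ, h μ ≤ C)
    (haffine : ∀ μ ν κ : {μ : ProbabilityMeasure X // (μ : Measure X).map f = (μ : Measure X)},
      ∀ t : ℝ, 0 ≤ t → t ≤ 1 →
      (κ.1 : Measure X) =
          ENNReal.ofReal t • (μ.1 : Measure X) + ENNReal.ofReal (1 - t) • (ν.1 : Measure X) →
      h κ = t * h μ + (1 - t) * h ν)
    (φ : ℕ → C(X, ℝ))
    (hmono : ∀ μ : {μ : ProbabilityMeasure X // (μ : Measure X).map f = (μ : Measure X)},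
      Antitone fun n : ℕ => ∫ x, φ n x ∂(μ.1 : Measure X)) :
    Tendsto (fun n : ℕ =>
        ⨆ μ : {μ : ProbabilityMeasure X // (μ : Measure X).map f = (μ : Measure X)},
          ((h μ + ∫ x, φ n x ∂(μ.1 : Measure X) : ℝ) : EReal)) atTop
      (nhds (⨆ μ : {μ : ProbabilityMeasure X // (μ : Measure X).map f = (μ : Measure X)},
        ((h μ : EReal) + ⨅ n : ℕ, ((∫ x, φ n x ∂(μ.1 : Measure X) : ℝ) : EReal)))) := by
  classical
  set S : ℕ → EReal := fun n : ℕ =>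
      ⨆ μ : {μ : ProbabilityMeasure X // (μ : Measure X).map f = (μ : Measure X)},
        ((h μ + ∫ x, φ n x ∂(μ.1 : Measure X) : ℝ) : EReal) with hSdef
  have hle_S : ∀ (n : ℕ) (μ : {μ : ProbabilityMeasure X // (μ : Measure X).map f = (μ : Measure X)}),
      ((h μ + ∫ x, φ n x ∂(μ.1 : Measure X) : ℝ) : EReal) ≤ S n := by
    intro n μ
    simp only [hSdef]
    exact le_iSup (fun μ : {μ : ProbabilityMeasure X // (μ : Measure X).map f = (μ : Measure X)} =>
      ((h μ + ∫ x, φ n x ∂(μ.1 : Measure X) : ℝ) : EReal)) μ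
  have hS_le : ∀ (n : ℕ) (B : EReal),
      (∀ μ : {μ : ProbabilityMeasure X // (μ : Measure X).map f = (μ : Measure X)},
        ((h μ + ∫ x, φ n x ∂(μ.1 : Measure X) : ℝ) : EReal) ≤ B) → S n ≤ B := by
    intro n B hB
    simp only [hSdef]
    exact iSup_le hB
  have hlt_S : ∀ {n : ℕ} {x : EReal}, x < S n →
      ∃ μ : {μ : ProbabilityMeasure X // (μ : Measure X).map f = (μ : Measure X)},
        x < ((h μ + ∫ x, φ n x ∂(μ.1 : Measure X) : ℝ) : EReal) := by
    intro n x hx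
    simp only [hSdef] at hx
    exact lt_iSup_iff.1 hx
  have hanti : Antitone S := by
    intro m n hmn
    simp only [hSdef]
    refine iSup_mono fun μ => ?_
    exact EReal.coe_le_coe_iff.2 (add_le_add_right (hmono μ hmn) (h μ))
  have htend := tendsto_atTop_iInf hanti
  suffices heq : (⨅ n, S n) =
      ⨆ μ : {μ : ProbabilityMeasure X // (μ : Measure X).map f = (μ : Measure X)},
        ((h μ : EReal) + ⨅ n : ℕ, ((∫ x, φ n x ∂(μ.1 : Measure X) : ℝ) : EReal)) by
    rw [heq] at htend
    exact htend
  have hIbd : ∀ (g : C(X, ℝ)) (μ : ProbabilityMeasure X),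
      |∫ x, g x ∂(μ : Measure X)| ≤ ‖g‖ := by
    intro g μ
    have hb : ∀ᵐ x ∂(μ : Measure X), ‖g x‖ ≤ ‖g‖ :=
      Filter.Eventually.of_forall fun x => g.norm_coe_le_norm x
    have := norm_integral_le_of_norm_le_const hb
    simpa [Real.norm_eq_abs, measure_univ] using this
  rcases isEmpty_or_nonempty
      {μ : ProbabilityMeasure X // (μ : Measure X).map f = (μ : Measure X)} with hemp | hne
  · have h1 : ∀ n, S n = ⊥ := fun n => by simp only [hSdef]; exact iSup_of_empty _
    have h2 : (⨅ n, S n) = (⊥ : EReal) := by simp [h1]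
    rw [h2, iSup_of_empty]
  · obtain ⟨C, hC⟩ := hbdd
    obtain ⟨μ0⟩ := hne
    haveI hXne : Nonempty X := μ0.1.nonempty
    apply le_antisymm
    · -- hard direction
      have hSnt : ∀ n, S n ≠ ⊤ := by
        intro n
        have hub : S n ≤ ((C + ‖φ n‖ : ℝ) : EReal) := by
          refine hS_le n _ fun μ => EReal.coe_le_coe_iff.2 ?_
          have h1 := hC μ
          have h2 := (abs_le.1 (hIbd (φ n) μ.1)).2
          linarith
        exact ne_top_of_le_ne_top (EReal.coe_ne_top _) hub
      have hSnb : ∀ n, S n ≠ ⊥ := fun n =>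
        ne_bot_of_le_ne_bot (EReal.coe_ne_bot _) (hle_S n μ0)
      set b : ℕ → ℝ := fun n => (S n).toReal with hbdef
      have hSb : ∀ n, S n = ((b n : ℝ) : EReal) := fun n =>
        (EReal.coe_toReal (hSnt n) (hSnb n)).symm
      have hchoose : ∀ n : ℕ,
          ∃ μ : {μ : ProbabilityMeasure X // (μ : Measure X).map f = (μ : Measure X)},
          b n - ((n : ℝ) + 1)⁻¹ < h μ + ∫ x, φ n x ∂(μ.1 : Measure X) := by
        intro n
        have hpos' : (0 : ℝ) < ((n : ℝ) + 1)⁻¹ := by positivity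
        have hlt : ((b n - ((n : ℝ) + 1)⁻¹ : ℝ) : EReal) < S n := by
          rw [hSb n]
          exact EReal.coe_lt_coe_iff.2 (by linarith)
        obtain ⟨μ, hμ⟩ := hlt_S hlt
        exact ⟨μ, EReal.coe_lt_coe_iff.1 hμ⟩
      choose ρ hρ using hchoose
      obtain ⟨𝒰, h𝒰⟩ := Filter.exists_ultrafilter_le (atTop : Filter ℕ)
      have hex : ∀ g : C(X, ℝ), ∃ a : ℝ,
          Tendsto (fun k => ∫ x, g x ∂((ρ k).1 : Measure X)) (𝒰 : Filter ℕ) (𝓝 a) := by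
        intro g
        have hmem : ∀ k, (∫ x, g x ∂((ρ k).1 : Measure X)) ∈ Set.Icc (-‖g‖) ‖g‖ := fun k =>
          abs_le.1 (hIbd g (ρ k).1)
        obtain ⟨a, -, ha⟩ := isCompact_Icc.ultrafilter_le_nhds
          (𝒰.map (fun k => ∫ x, g x ∂((ρ k).1 : Measure X)))
          (by
            rw [Ultrafilter.coe_map]
            exact le_principal_iff.2 (Filter.mem_map.2 (Filter.univ_mem' hmem)))
        refine ⟨a, ?_⟩
        rw [Ultrafilter.coe_map] at ha
        exact ha
      choose Lam hLam using hex
      have hinteg : ∀ (g : C(X, ℝ)) (m : Measure X), IsProbabilityMeasure m →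
          Integrable (fun x => g x) m := fun g m hm =>
        g.continuous.integrable_of_hasCompactSupport (HasCompactSupport.of_compactSpace _)
      have haddL : ∀ g₁ g₂ : C(X, ℝ), Lam (g₁ + g₂) = Lam g₁ + Lam g₂ := by
        intro g₁ g₂
        refine tendsto_nhds_unique (hLam (g₁ + g₂)) ?_
        have he : (fun k => ∫ x, (g₁ + g₂) x ∂((ρ k).1 : Measure X))
            = fun k => (∫ x, g₁ x ∂((ρ k).1 : Measure X)) + ∫ x, g₂ x ∂((ρ k).1 : Measure X) := by
          funext k
          rw [← integral_add (hinteg g₁ _ inferInstance) (hinteg g₂ _ inferInstance)]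
          exact integral_congr_ae (Filter.Eventually.of_forall fun x => by simp)
        rw [he]
        exact (hLam g₁).add (hLam g₂)
      have hsmulL : ∀ (c : ℝ) (g : C(X, ℝ)), Lam (c • g) = c * Lam g := by
        intro c g
        refine tendsto_nhds_unique (hLam (c • g)) ?_
        have he : (fun k => ∫ x, (c • g) x ∂((ρ k).1 : Measure X))
            = fun k => c * ∫ x, g x ∂((ρ k).1 : Measure X) := by
          funext k
          rw [← integral_const_mul]
          exact integral_congr_ae (Filter.Eventually.of_forall fun x => by simp)
        rw [he]
        exact (hLam g).const_mul c
      have hposL : ∀ g : C(X, ℝ), (∀ x, 0 ≤ g x) → 0 ≤ Lam g := fun g hg =>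
        ge_of_tendsto (hLam g)
          (Filter.Eventually.of_forall fun k => integral_nonneg fun x => hg x)
      have honeL : Lam 1 = 1 := by
        refine tendsto_nhds_unique (hLam 1) ?_
        have he : (fun k => ∫ x, (1 : C(X, ℝ)) x ∂((ρ k).1 : Measure X)) = fun _ => (1 : ℝ) := by
          funext k
          simp
        rw [he]
        exact tendsto_const_nhds
      obtain ⟨ν, hνprob, hνrep⟩ := CFHaux.exists_rep Lam haddL hposL honeL hsmulL
      haveI := hνprob
      have hinv : ν.map f = ν := by
        haveI : IsProbabilityMeasure (ν.map f) := Measure.isProbabilityMeasure_map hf.aemeasurable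
        apply ext_of_forall_lintegral_eq_of_IsFiniteMeasure
        intro q
        set gq : C(X, ℝ) := ⟨fun x => (q x : ℝ), NNReal.continuous_coe.comp q.continuous⟩ with hgq
        have hinteg1 : Integrable (fun x => gq x) (ν.map f) :=
          gq.continuous.integrable_of_hasCompactSupport (HasCompactSupport.of_compactSpace _)
        have hinteg2 : Integrable (fun x => gq x) ν :=
          gq.continuous.integrable_of_hasCompactSupport (HasCompactSupport.of_compactSpace _)
        have h1 : ∫⁻ x, (q x : ℝ≥0∞) ∂(ν.map f) = ENNReal.ofReal (∫ x, gq x ∂(ν.map f)) :=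
          lintegral_coe_eq_integral _ hinteg1
        have h2 : ∫⁻ x, (q x : ℝ≥0∞) ∂ν = ENNReal.ofReal (∫ x, gq x ∂ν) :=
          lintegral_coe_eq_integral _ hinteg2
        have h3 : ∫ x, gq x ∂(ν.map f) = ∫ x, gq (f x) ∂ν :=
          integral_map hf.aemeasurable gq.continuous.aestronglyMeasurable
        have h4 : ∫ x, gq (f x) ∂ν = Lam (gq.comp ⟨f, hf⟩) := hνrep (gq.comp ⟨f, hf⟩)
        have h5 : Lam (gq.comp ⟨f, hf⟩) = Lam gq := by
          refine tendsto_nhds_unique (hLam _) ?_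
          have he : (fun k => ∫ x, (gq.comp ⟨f, hf⟩) x ∂((ρ k).1 : Measure X))
              = fun k => ∫ x, gq x ∂((ρ k).1 : Measure X) := by
            funext k
            conv_rhs => rw [← (ρ k).2]
            rw [integral_map hf.aemeasurable gq.continuous.aestronglyMeasurable]
            rfl
          rw [he]
          exact hLam gq
        rw [h1, h2, h3, h4, h5, hνrep gq]
      set P : ProbabilityMeasure X := ⟨ν, hνprob⟩ with hP
      set μinf : {μ : ProbabilityMeasure X // (μ : Measure X).map f = (μ : Measure X)} :=
        ⟨P, hinv⟩ with hμinf
      have hPint : ∀ g : C(X, ℝ), ∫ x, g x ∂(μinf.1 : Measure X) = Lam g := fun g => hνrep g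
      have htendP : Tendsto (fun k => (ρ k).1) (𝒰 : Filter ℕ) (𝓝 P) := by
        rw [ProbabilityMeasure.tendsto_iff_forall_integral_tendsto]
        intro q
        have hq : ∫ x, q x ∂(P : Measure X) = Lam q.toContinuousMap := hνrep _
        rw [hq]
        exact hLam q.toContinuousMap
      have htendM : Tendsto ρ (𝒰 : Filter ℕ) (𝓝 μinf) := tendsto_subtype_rng.2 htendP
      refine le_trans ?_ (le_iSup _ μinf)
      rw [CFHaux.ereal_add_iInf (h μinf)
        (fun n => ((∫ x, φ n x ∂(μinf.1 : Measure X) : ℝ) : EReal))]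
      refine le_iInf fun s => ?_
      have hcoe : ((h μinf : ℝ) : EReal) + ((∫ x, φ s x ∂(μinf.1 : Measure X) : ℝ) : EReal)
          = ((h μinf + ∫ x, φ s x ∂(μinf.1 : Measure X) : ℝ) : EReal) := (EReal.coe_add _ _).symm
      rw [hcoe]
      apply CFHaux.ereal_le_coe_of_forall_eps
      intro ε hε
      have hε3 : 0 < ε / 3 := by linarith
      have E1 : ∀ᶠ k in (𝒰 : Filter ℕ), h (ρ k) < h μinf + ε / 3 :=
        htendM.eventually (husc μinf (h μinf + ε / 3) (by linarith))
      have E2 : ∀ᶠ k in (𝒰 : Filter ℕ),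
          (∫ x, φ s x ∂((ρ k).1 : Measure X)) < (∫ x, φ s x ∂(μinf.1 : Measure X)) + ε / 3 := by
        have hlt : Lam (φ s) < (∫ x, φ s x ∂(μinf.1 : Measure X)) + ε / 3 := by
          rw [hPint (φ s)]
          linarith
        exact (hLam (φ s)).eventually_lt_const hlt
      have E3 : ∀ᶠ k in (𝒰 : Filter ℕ), s ≤ k := h𝒰 (eventually_ge_atTop s)
      have E4 : ∀ᶠ (k : ℕ) in (𝒰 : Filter ℕ), ((k : ℝ) + 1)⁻¹ < ε / 3 := by
        apply h𝒰
        have h0 : Tendsto (fun k : ℕ => ((k : ℝ) + 1)⁻¹) atTop (𝓝 0) := by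
          simpa [one_div] using tendsto_one_div_add_atTop_nhds_zero_nat (𝕜 := ℝ)
        exact h0.eventually_lt_const hε3
      obtain ⟨k, ⟨⟨hk1, hk2⟩, hk3⟩, hk4⟩ := (((E1.and E2).and E3).and E4).exists
      have hbk : b k ≤ h μinf + (∫ x, φ s x ∂(μinf.1 : Measure X)) + ε := by
        have h1 := hρ k
        have h2 : (∫ x, φ k x ∂((ρ k).1 : Measure X))
            ≤ ∫ x, φ s x ∂((ρ k).1 : Measure X) := hmono (ρ k) hk3
        linarith
      calc (⨅ n, S n) ≤ S k := iInf_le _ k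
        _ = ((b k : ℝ) : EReal) := hSb k
        _ ≤ _ := EReal.coe_le_coe_iff.2 hbk
    · -- easy direction
      refine iSup_le fun μ => le_iInf fun n => ?_
      have h1 : ((h μ : ℝ) : EReal) + ⨅ m : ℕ, ((∫ x, φ m x ∂(μ.1 : Measure X) : ℝ) : EReal)
          ≤ ((h μ : ℝ) : EReal) + ((∫ x, φ n x ∂(μ.1 : Measure X) : ℝ) : EReal) :=
        add_le_add_right (iInf_le _ n) _
      refine h1.trans ?_
      rw [← EReal.coe_add]
      exact hle_S n μ
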